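/- Let f : ℝ → ℝ be continuous and monotone. Then L_f^∞ = {x ∈ ℝ : Lip f(x) = ∞} is a G_δ set of Lebesgue measure zero. -/

import Mathlib

open Set Filter MeasureTheory Topology
open scoped ENNReal NNReal

/-- `M_f(x,r) = sup { |f(x)-f(y)|/r : |x-y| ≤ r }`, valued in `[0,∞]`. -/
noncomputable def Mf (f : ℝ → ℝ) (x r : ℝ) : ℝ≥0∞ :=
  ⨆ y ∈ {y : ℝ | |x - y| ≤ r}, ENNReal.ofReal (|f x - f y| / r)

/-- The big Lip function: `Lip f(x) = limsup_{r→0⁺} M_f(x,r)`. -/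
noncomputable def bigLip (f : ℝ → ℝ) (x : ℝ) : ℝ≥0∞ :=
  Filter.limsup (fun r => Mf f x r) (𝓝[>] (0 : ℝ))

/-- The little lip function: `lip f(x) = liminf_{r→0⁺} M_f(x,r)`. -/
noncomputable def litLip (f : ℝ → ℝ) (x : ℝ) : ℝ≥0∞ :=
  Filter.liminf (fun r => Mf f x r) (𝓝[>] (0 : ℝ))

/-- A set `E ⊆ ℝ` is trim if `λ(E ∩ (a,b)) < b - a` for every open interval `(a,b)`. -/
def Trim (E : Set ℝ) : Prop :=
  ∀ a b : ℝ, a < b → volume (E ∩ Ioo a b) < ENNReal.ofReal (b - a)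

private lemma bigLip_ne_top_of_diff {f : ℝ → ℝ} {x : ℝ}
    (h : DifferentiableAt ℝ f x) : bigLip f x ≠ ⊤ := by
  set d := deriv f x with hd
  have h1 : ∀ᶠ y in 𝓝 x, ‖f y - f x - (y - x) • d‖ ≤ 1 * ‖y - x‖ :=
    (hasDerivAt_iff_isLittleO.mp h.hasDerivAt).bound one_pos
  rw [Metric.eventually_nhds_iff] at h1
  obtain ⟨δ, hδ, hb⟩ := h1
  have hev : ∀ᶠ r in 𝓝[>] (0:ℝ), Mf f x r ≤ ENNReal.ofReal (|d| + 1) := by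
    filter_upwards [Ioo_mem_nhdsGT_of_mem (Set.mem_Ico.mpr ⟨le_refl 0, hδ⟩)] with r hr
    refine iSup₂_le fun y hy => ?_
    simp only [Set.mem_setOf_eq] at hy
    refine ENNReal.ofReal_le_ofReal ?_
    rw [div_le_iff₀ hr.1]
    have hdy : dist y x < δ := by
      rw [Real.dist_eq, abs_sub_comm]
      exact lt_of_le_of_lt hy hr.2
    have := hb hdy
    simp only [smul_eq_mul, Real.norm_eq_abs, one_mul] at this
    have h2 : |f x - f y| ≤ |f y - f x - (y - x) * d| + |(y - x) * d| := by
      rw [abs_sub_comm]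
      calc |f y - f x| = |(f y - f x - (y - x) * d) + (y - x) * d| := by ring_nf
        _ ≤ _ := abs_add_le _ _
    have h3 : |(y - x) * d| = |y - x| * |d| := abs_mul _ _
    have h4 : |y - x| ≤ r := by rwa [abs_sub_comm]
    nlinarith [abs_nonneg d, abs_nonneg (y - x), hr.1.le]
  have : bigLip f x ≤ ENNReal.ofReal (|d| + 1) := limsup_le_of_le (by isBoundedDefault) hev
  exact fun htop => absurd (htop ▸ this) (by simp)

private lemma isOpen_U (f : ℝ → ℝ) (hf : Continuous f) (n m : ℕ) :
    IsOpen {x : ℝ | ∃ r : ℝ, 0 < r ∧ r < 1 / (m + 1 : ℝ) ∧ (n : ℝ≥0∞) < Mf f x r} := by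
  rw [isOpen_iff_mem_nhds]
  rintro x ⟨r, hr0, hrm, hM⟩
  simp only [Mf, lt_iSup_iff, Set.mem_setOf_eq] at hM
  obtain ⟨y, hy, hny⟩ := hM
  have hc : (n : ℝ) < |f x - f y| / r := ENNReal.natCast_lt_ofReal.mp hny
  set c := |f x - f y| with hcdef
  have hcont : ContinuousAt (fun s : ℝ => c / s) r := continuousAt_const.div continuousAt_id hr0.ne'
  have hev1 : ∀ᶠ s in 𝓝[>] r, (n : ℝ) < c / s :=
    nhdsWithin_le_nhds (hcont.eventually_mem (Ioi_mem_nhds hc))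
  have hev2 : Ioo r (1 / (m + 1 : ℝ)) ∈ 𝓝[>] r :=
    Ioo_mem_nhdsGT_of_mem (Set.mem_Ico.mpr ⟨le_refl r, hrm⟩)
  obtain ⟨r', hr'1, hr'2⟩ := (hev1.and (eventually_mem_set.mpr hev2)).exists
  obtain ⟨hrr', hr'm⟩ := hr'2
  have hV1 : IsOpen {x' : ℝ | |x' - y| < r'} := by
    have : {x' : ℝ | |x' - y| < r'} = (fun x' : ℝ => |x' - y|) ⁻¹' Iio r' := rfl
    rw [this]
    exact isOpen_Iio.preimage ((continuous_id.sub continuous_const).abs)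
  have hV2 : IsOpen {x' : ℝ | (n : ℝ) < |f x' - f y| / r'} := by
    have : {x' : ℝ | (n : ℝ) < |f x' - f y| / r'}
        = (fun x' : ℝ => |f x' - f y| / r') ⁻¹' Ioi n := rfl
    rw [this]
    exact isOpen_Ioi.preimage (((hf.sub continuous_const).abs).div_const r')
  refine Filter.mem_of_superset (((hV1.inter hV2).mem_nhds ?_)) ?_
  · exact ⟨lt_of_le_of_lt hy hrr', hr'1⟩
  · rintro x' ⟨h1, h2⟩
    refine ⟨r', hr0.trans hrr', hr'm, ?_⟩
    calc (n : ℝ≥0∞) < ENNReal.ofReal (|f x' - f y| / r') := ENNReal.natCast_lt_ofReal.mpr h2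
      _ ≤ Mf f x' r' := by
          exact le_iSup₂_of_le y (Set.mem_setOf_eq ▸ le_of_lt h1) le_rfl

private lemma bigLip_top_eq_iInter (f : ℝ → ℝ) :
    {x : ℝ | bigLip f x = ⊤} = ⋂ (n : ℕ), ⋂ (m : ℕ),
      {x : ℝ | ∃ r : ℝ, 0 < r ∧ r < 1 / (m + 1 : ℝ) ∧ (n : ℝ≥0∞) < Mf f x r} := by
  ext x
  simp only [Set.mem_iInter, Set.mem_setOf_eq]
  constructor
  · intro h n m
    by_contra hcon
    push_neg at hcon
    have hev : ∀ᶠ r in 𝓝[>] (0:ℝ), Mf f x r ≤ (n : ℝ≥0∞) := by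
      filter_upwards [Ioo_mem_nhdsGT_of_mem
        (Set.mem_Ico.mpr ⟨le_refl (0:ℝ), one_div_pos.mpr (add_pos_of_nonneg_of_pos (Nat.cast_nonneg m) one_pos)⟩)] with r hr
      exact hcon r hr.1 hr.2
    have hle : bigLip f x ≤ (n : ℝ≥0∞) := limsup_le_of_le (by isBoundedDefault) hev
    exact absurd (top_le_iff.mp (h ▸ hle)) (ENNReal.natCast_ne_top n)
  · intro h
    have key : ∀ n : ℕ, (n : ℝ≥0∞) ≤ bigLip f x := by
      intro n
      refine le_limsup_of_frequently_le' ?_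
      rw [Filter.frequently_iff]
      intro s hs
      obtain ⟨u, hu, hsub⟩ := mem_nhdsGT_iff_exists_Ioo_subset.mp hs
      obtain ⟨m, hm⟩ := exists_nat_one_div_lt (Set.mem_Ioi.mp hu)
      obtain ⟨r, hr0, hrm, hM⟩ := h n m
      exact ⟨r, hsub ⟨hr0, hrm.trans hm⟩, le_of_lt hM⟩
    have htop : ⊤ ≤ bigLip f x := by
      rw [← ENNReal.iSup_natCast]
      exact iSup_le key
    exact top_le_iff.mp htop

/-- If `f : ℝ → ℝ` is continuous and monotone, then `L_f^∞` is a `G_δ` set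
of Lebesgue measure zero. -/
theorem Lip_infinite_set_of_monotone (f : ℝ → ℝ) (hf : Continuous f)
    (hmono : Monotone f ∨ Antitone f) :
    IsGδ {x : ℝ | bigLip f x = ⊤} ∧ volume {x : ℝ | bigLip f x = ⊤} = 0 := by
  constructor
  · rw [bigLip_top_eq_iInter f]
    exact .iInter fun n => .iInter fun m => (isOpen_U f hf n m).isGδ
  · have hae : ∀ᵐ x, DifferentiableAt ℝ f x := by
      rcases hmono with hm | hm
      · exact hm.ae_differentiableAt
      · have hm' : Monotone (fun x => -f x) := fun a b hab => neg_le_neg (hm hab)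
        filter_upwards [hm'.ae_differentiableAt] with x hx
        simpa using hx.neg
    have h0 : volume {x : ℝ | ¬ DifferentiableAt ℝ f x} = 0 := ae_iff.mp hae
    refine measure_mono_null (fun x hx => ?_) h0
    exact fun hd => (bigLip_ne_top_of_diff hd) hx
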